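/- arXiv:2202.07151 — 4 statements merged into one kernel-verified Lean document; each statement's English description precedes it below -/
import Mathlib

section
/- Let (M, d) be a metric space, p ∈ M, and f : M → ℝ a nonnegative function such that f(p) > 0 and sup_{x ∈ B(p,2)} f(x) < ∞, where B(p,r) denotes the open metric ball of radius r. Then there exists a point q ∈ B(p,2) such that f(q) ≥ f(p) and f(x) ≤ 4·f(q) for every x in the ball B(q, f(p)^{1/2}·f(q)^{-1/2}). -/
/-- Point-selection lemma: if `f` is a nonnegative function on a metric space,
positive at `p` and bounded above on the ball `B(p,2)`, then there is a point
`q ∈ B(p,2)` with `f q ≥ f p` such that `f ≤ 4 f(q)` on the ball of radius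
`√(f p) / √(f q)` about `q`. -/
theorem point_selection {M : Type*} [MetricSpace M] (p : M) (f : M → ℝ)
    (hf_nonneg : ∀ x, 0 ≤ f x) (hfp : 0 < f p)
    (hbdd : BddAbove (f '' Metric.ball p 2)) :
    ∃ q ∈ Metric.ball p 2, f p ≤ f q ∧
      ∀ x ∈ Metric.ball q (Real.sqrt (f p) / Real.sqrt (f q)), f x ≤ 4 * f q := by
  by_contra hcon
  push_neg at hcon
  obtain ⟨C, hC⟩ := hbdd
  set Q : ℕ → M → Prop := fun k q =>
    dist p q ≤ 2 - 2 * (2:ℝ)⁻¹ ^ k ∧ (4:ℝ) ^ k * f p ≤ f q with hQ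
  have hball : ∀ k q, Q k q → q ∈ Metric.ball p 2 := by
    rintro k q ⟨hd, _⟩
    rw [Metric.mem_ball, dist_comm]
    have : (0:ℝ) < 2 * (2:ℝ)⁻¹ ^ k := by positivity
    linarith
  have hstep : ∀ k, (∃ q, Q k q) → ∃ q, Q (k+1) q := by
    rintro k ⟨q, hd, hfq⟩
    have h4k : (1:ℝ) ≤ 4 ^ k := one_le_pow₀ (by norm_num)
    have hfq0 : 0 < f q := lt_of_lt_of_le (by nlinarith) hfq
    have hqball : q ∈ Metric.ball p 2 := hball k q ⟨hd, hfq⟩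
    have hfpq : f p ≤ f q := le_trans (by nlinarith) hfq
    obtain ⟨x, hx, hx4⟩ := hcon q hqball hfpq
    have hr : Real.sqrt (f p) / Real.sqrt (f q) ≤ (2:ℝ)⁻¹ ^ k := by
      have h4 : (4:ℝ) ^ k = ((2:ℝ) ^ k) ^ 2 := by
        rw [← pow_mul, mul_comm, pow_mul]; norm_num
      have h1 : (2:ℝ) ^ k * Real.sqrt (f p) ≤ Real.sqrt (f q) := by
        have hs : Real.sqrt ((4:ℝ) ^ k * f p) ≤ Real.sqrt (f q) :=
          Real.sqrt_le_sqrt hfq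
        rwa [Real.sqrt_mul (by positivity), h4,
          Real.sqrt_sq (by positivity)] at hs
      rw [div_le_iff₀ (Real.sqrt_pos.2 hfq0), inv_pow, inv_mul_eq_div,
        le_div_iff₀ (by positivity : (0:ℝ) < (2:ℝ) ^ k)]
      nlinarith [Real.sqrt_nonneg (f p)]
    have hdx : dist q x ≤ (2:ℝ)⁻¹ ^ k := by
      have := Metric.mem_ball.1 hx
      rw [dist_comm] at this
      linarith
    have htri : dist p x ≤ dist p q + dist q x := dist_triangle p q x
    have hpow : (2:ℝ)⁻¹ ^ (k+1) = (2:ℝ)⁻¹ ^ k * 2⁻¹ := pow_succ _ _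
    refine ⟨x, ?_, ?_⟩
    · show dist p x ≤ 2 - 2 * (2:ℝ)⁻¹ ^ (k+1)
      rw [hpow]
      linarith
    · calc (4:ℝ) ^ (k+1) * f p = 4 * ((4:ℝ) ^ k * f p) := by ring
        _ ≤ 4 * f q := by nlinarith
        _ ≤ f x := le_of_lt hx4
  have hall : ∀ k, ∃ q, Q k q := by
    intro k
    induction k with
    | zero =>
      exact ⟨p, by simp [hQ], by simp [hQ]⟩
    | succ n ih => exact hstep n ih
  obtain ⟨n, hn⟩ := pow_unbounded_of_one_lt (C / f p) (by norm_num : (1:ℝ) < 4)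
  obtain ⟨q, hq⟩ := hall n
  have hle : f q ≤ C := hC ⟨q, hball n q hq, rfl⟩
  have := hq.2
  rw [div_lt_iff₀ hfp] at hn
  linarith
end

section
/- Let m > 0, c ≥ 0 and T > 0 be real numbers, and let H : [0, T) → ℝ be a differentiable function satisfying H'(t) ≥ H(t)²/m − m·c for all t ∈ [0, T). Then for every t₀ ∈ [0, T/2] one has H(t₀) ≤ max{ m·√(2c), 4m/T }. -/
/-- Riccati-type ODE estimate: if `H` satisfies `H' ≥ H²/m − m·c` on `[0,T)`,
then `H(t₀) ≤ max (m√(2c)) (4m/T)` for all `t₀ ∈ [0, T/2]`. -/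
theorem riccati_mean_curvature_bound (m c T : ℝ) (hm : 0 < m) (hc : 0 ≤ c) (hT : 0 < T)
    (H H' : ℝ → ℝ)
    (hderiv : ∀ t ∈ Set.Ico (0 : ℝ) T, HasDerivWithinAt H (H' t) (Set.Ico 0 T) t)
    (hineq : ∀ t ∈ Set.Ico (0 : ℝ) T, (H t) ^ 2 / m - m * c ≤ H' t) :
    ∀ t₀ ∈ Set.Icc (0 : ℝ) (T / 2), H t₀ ≤ max (m * Real.sqrt (2 * c)) (4 * m / T) := by
  intro t₀ ht₀
  by_contra hcon
  push_neg at hcon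
  obtain ⟨ht₀0, ht₀T⟩ := ht₀
  set a := H t₀ with ha_def
  have ha1 : m * Real.sqrt (2 * c) < a := lt_of_le_of_lt (le_max_left _ _) hcon
  have ha2 : 4 * m / T < a := lt_of_le_of_lt (le_max_right _ _) hcon
  have ha_pos : 0 < a := lt_trans (by positivity) ha2
  have hsq : 2 * m ^ 2 * c < a ^ 2 := by
    have h1 : (m * Real.sqrt (2 * c)) ^ 2 < a ^ 2 := by
      apply pow_lt_pow_left₀ ha1 (by positivity)
      norm_num
    have h2 : (m * Real.sqrt (2 * c)) ^ 2 = m ^ 2 * (2 * c) := by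
      rw [mul_pow, Real.sq_sqrt (by positivity)]
    nlinarith
  -- the blow-up time of the comparison solution
  have htstar : t₀ + 2 * m / a < T := by
    have h1 : 2 * m / a < T / 2 := by
      rw [div_lt_div_iff₀ ha_pos (by norm_num)]
      have : 4 * m / T * T = 4 * m := by field_simp
      nlinarith [(div_lt_iff₀ hT).mp ha2]
    linarith
  -- continuity of H
  have hHcont : ContinuousOn H (Set.Ico 0 T) := fun x hx =>
    (hderiv x hx).continuousWithinAt
  -- max of H on [t₀, t₀ + 2m/a]
  have hsub : Set.Icc t₀ (t₀ + 2 * m / a) ⊆ Set.Ico 0 T := fun x hx =>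
    ⟨le_trans ht₀0 hx.1, lt_of_le_of_lt hx.2 htstar⟩
  have hne : t₀ ∈ Set.Icc t₀ (t₀ + 2 * m / a) := ⟨le_refl _, le_add_of_nonneg_right (by positivity)⟩
  obtain ⟨x₁, hx₁, hKmax'⟩ := isCompact_Icc.exists_isMaxOn ⟨t₀, hne⟩ (hHcont.mono hsub)
  have hKmax : ∀ y ∈ Set.Icc t₀ (t₀ + 2 * m / a), H y ≤ H x₁ := fun y hy => hKmax' hy
  set K := H x₁ with hK_def
  have hKa : a ≤ K := hKmax t₀ hne
  have hK_pos : 0 < K := lt_of_lt_of_le ha_pos hKa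
  -- setup comparison function
  set d : ℝ → ℝ := fun t => 1 / a - (t - t₀) * (2 * m)⁻¹ with hd_def
  set b := t₀ + 2 * m * (1 / a - 1 / (2 * K)) with hb_def
  have hdb : d b = 1 / (2 * K) := by
    simp only [hd_def, hb_def]
    field_simp
    ring
  have ht₀b : t₀ ≤ b := by
    have : 1 / (2 * K) ≤ 1 / a := by
      apply one_div_le_one_div_of_le ha_pos; linarith
    have h2 : 0 ≤ 1 / a - 1 / (2 * K) := by linarith
    have h3 : 0 ≤ 2 * m * (1 / a - 1 / (2 * K)) := mul_nonneg (by positivity) h2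
    rw [hb_def]
    linarith
  have hbtstar : b < t₀ + 2 * m / a := by
    have : 0 < 1 / (2 * K) := by positivity
    have h2 : 2 * m * (1 / a - 1 / (2 * K)) < 2 * m * (1 / a) := by
      apply mul_lt_mul_of_pos_left _ (by positivity)
      linarith
    have h3 : 2 * m * (1 / a) = 2 * m / a := by ring
    linarith
  -- positivity of d on [t₀, b]
  have hd_pos : ∀ x ∈ Set.Icc t₀ b, 1 / (2 * K) ≤ d x := by
    intro x hx
    rw [← hdb]
    simp only [hd_def]
    have : (x - t₀) * (2 * m)⁻¹ ≤ (b - t₀) * (2 * m)⁻¹ := by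
      apply mul_le_mul_of_nonneg_right (by linarith [hx.2]) (by positivity)
    linarith
  have hd_le : ∀ x ∈ Set.Icc t₀ b, d x ≤ 1 / a := by
    intro x hx
    simp only [hd_def]
    have : 0 ≤ (x - t₀) * (2 * m)⁻¹ := by
      apply mul_nonneg (by linarith [hx.1]) (by positivity)
    linarith
  -- derivative of B := -(d)⁻¹
  have hdB : ∀ x, d x ≠ 0 → HasDerivAt (fun t => -(d t)⁻¹) (-((2 * m)⁻¹ / (d x) ^ 2)) x := by
    intro x hdx
    have h1 : HasDerivAt d (-(2 * m)⁻¹) x := by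
      have h0 := (((hasDerivAt_id x).sub_const t₀).mul_const ((2 * m)⁻¹)).const_sub (1 / a)
      simp only [one_mul, id] at h0
      exact h0
    have h2 := h1.inv hdx
    have h3 : -(-(2 * m)⁻¹) / d x ^ 2 = (2 * m)⁻¹ / (d x) ^ 2 := by ring
    rw [h3] at h2
    exact h2.neg
  -- the fencing theorem
  have key : ∀ ⦃x⦄, x ∈ Set.Icc t₀ b → -H x ≤ -(d x)⁻¹ := by
    apply image_le_of_deriv_right_lt_deriv_boundary' (a := t₀) (b := b) (f := fun x => -H x)
      (f' := fun x => -H' x) (B := fun t => -(d t)⁻¹)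
      (B' := fun x => -((2 * m)⁻¹ / (d x) ^ 2))
    case hf =>
      exact ((hHcont.mono (fun x hx => hsub ⟨hx.1, le_trans hx.2 (le_of_lt hbtstar)⟩)).neg)
    case hf' =>
      intro x hx
      have hx' : x ∈ Set.Ico (0 : ℝ) T :=
        hsub ⟨hx.1, le_trans (le_of_lt hx.2) (le_of_lt hbtstar)⟩
      have hmem : Set.Ico (0 : ℝ) T ∈ nhdsWithin x (Set.Ici x) := by
        apply mem_nhdsWithin.2 ⟨Set.Iio T, isOpen_Iio, hx'.2, ?_⟩
        intro y hy
        exact ⟨le_trans hx'.1 hy.2, hy.1⟩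
      exact ((hderiv x hx').mono_of_mem_nhdsWithin hmem).neg
    case ha =>
      have hd0 : d t₀ = 1 / a := by simp [hd_def]
      simp only [hd0, one_div, inv_inv, le_refl]
      exact le_rfl
    case hB =>
      apply ContinuousOn.neg
      apply ContinuousOn.inv₀
      · apply Continuous.continuousOn; fun_prop
      · intro x hx
        have h := hd_pos x ⟨hx.1, hx.2⟩
        exact ne_of_gt (lt_of_lt_of_le (by positivity) h)
    case hB' =>
      intro x hx
      exact (hdB x (ne_of_gt (lt_of_lt_of_le (by positivity) (hd_pos x ⟨hx.1, le_of_lt hx.2⟩)))).hasDerivWithinAt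
    case bound =>
      intro x hx heq
      have hxI : x ∈ Set.Icc t₀ b := ⟨hx.1, le_of_lt hx.2⟩
      have hx' : x ∈ Set.Ico (0 : ℝ) T :=
        hsub ⟨hxI.1, le_trans hxI.2 (le_of_lt hbtstar)⟩
      have hdx_pos : 0 < d x := lt_of_lt_of_le (by positivity) (hd_pos x hxI)
      have hHx : H x = (d x)⁻¹ := by
        have h := neg_injective heq
        linarith [h]
      have hHx_ge : a ≤ H x := by
        rw [hHx]
        rw [show a = (1 / a)⁻¹ by simp]
        exact inv_anti₀ hdx_pos (hd_le x hxI)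
      have h1 := hineq x hx'
      have h2 : (H x) ^ 2 / m - m * c > (H x) ^ 2 / (2 * m) := by
        rw [gt_iff_lt, div_sub' (ne_of_gt hm), div_lt_div_iff₀ (by positivity) hm]
        nlinarith [pow_le_pow_left₀ (le_of_lt ha_pos) hHx_ge 2]
      have h3 : (H x) ^ 2 / (2 * m) = (2 * m)⁻¹ / (d x) ^ 2 := by
        rw [hHx]
        field_simp
      linarith
  -- conclusion: H b ≥ 2K but H b ≤ K
  have hfinal := key ⟨ht₀b, le_refl b⟩
  rw [hdb] at hfinal
  have h2K : (1 / (2 * K) : ℝ)⁻¹ = 2 * K := by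
    rw [one_div, inv_inv]
  rw [h2K] at hfinal
  have hHb : H b ≤ K := hKmax b ⟨ht₀b, le_of_lt hbtstar⟩
  linarith
end

section
/- Let n ≥ 1, let U ⊆ ℝⁿ be an open set invariant under the reflection σ(x₁,…,x_{n−1},x_n) = (x₁,…,x_{n−1},−x_n), and let u : ℝⁿ → ℝ satisfy u(σ(x)) = u(x) for all x ∈ U. Suppose u is C² on U⁺ := U ∩ {x : x_n ≥ 0} in the sense of being twice continuously differentiable within U⁺ (ContDiffOn of order 2 on U⁺), and that the partial derivative ∂u/∂x_n, computed within U⁺, vanishes at every point of U ∩ {x : x_n = 0}. Then u is C² on all of U. -/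
open Set Metric Filter ContinuousLinearMap
open scoped Topology

noncomputable section ReflAux

variable {n : ℕ}

/-- The reflection in the hyperplane `{x_last = 0}` as a continuous linear map. -/
noncomputable def reflCLM (n : ℕ) : (Fin (n + 1) → ℝ) →L[ℝ] (Fin (n + 1) → ℝ) :=
  ContinuousLinearMap.pi (fun i =>
    if i = Fin.last n then -(ContinuousLinearMap.proj (Fin.last n)) else ContinuousLinearMap.proj i)

lemma reflCLM_apply (x : Fin (n + 1) → ℝ) :
    reflCLM n x = Function.update x (Fin.last n) (-(x (Fin.last n))) := by
  funext i
  by_cases h : i = Fin.last n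
  · subst h
    simp [reflCLM, Function.update]
  · simp [reflCLM, Function.update, h]

lemma reflCLM_apply_last (x : Fin (n + 1) → ℝ) :
    reflCLM n x (Fin.last n) = -(x (Fin.last n)) := by
  rw [reflCLM_apply]; simp

lemma reflCLM_apply_ne (x : Fin (n + 1) → ℝ) {i : Fin (n + 1)} (h : i ≠ Fin.last n) :
    reflCLM n x i = x i := by
  rw [reflCLM_apply]; simp [Function.update, h]

lemma reflCLM_involutive (x : Fin (n + 1) → ℝ) : reflCLM n (reflCLM n x) = x := by
  funext i
  by_cases h : i = Fin.last n
  · subst h; rw [reflCLM_apply_last, reflCLM_apply_last, neg_neg]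
  · rw [reflCLM_apply_ne _ h, reflCLM_apply_ne _ h]

lemma reflCLM_eq_self {x : Fin (n + 1) → ℝ} (h : x (Fin.last n) = 0) : reflCLM n x = x := by
  funext i
  by_cases hi : i = Fin.last n
  · subst hi; rw [reflCLM_apply_last, h, neg_zero]
  · rw [reflCLM_apply_ne _ hi]

lemma reflCLM_eq_sub (x : Fin (n + 1) → ℝ) :
    reflCLM n x = x - (2 * x (Fin.last n)) • (Pi.single (Fin.last n) 1 : Fin (n+1) → ℝ) := by
  funext i
  by_cases h : i = Fin.last n
  · subst h
    rw [reflCLM_apply_last]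
    simp [Pi.single_eq_same]
    ring
  · rw [reflCLM_apply_ne _ h]
    simp [Pi.single_eq_of_ne h]

lemma mem_closure_upper {V : Set (Fin (n + 1) → ℝ)} (hV : IsOpen V) {y : Fin (n + 1) → ℝ}
    (hy : y ∈ V) (hyl : 0 ≤ y (Fin.last n)) :
    y ∈ closure (V ∩ {x | 0 < x (Fin.last n)}) := by
  have hcont : Continuous fun t : ℝ => y + t • (Pi.single (Fin.last n) 1 : Fin (n+1) → ℝ) := by
    fun_prop
  have h1 : Tendsto (fun t : ℝ => y + t • (Pi.single (Fin.last n) 1 : Fin (n+1) → ℝ)) (𝓝[>] (0 : ℝ)) (𝓝 y) := by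
    have := hcont.tendsto 0
    simp only [zero_smul, add_zero] at this
    exact this.mono_left nhdsWithin_le_nhds
  refine mem_closure_of_tendsto h1 ?_
  filter_upwards [h1.eventually (hV.mem_nhds hy), self_mem_nhdsWithin] with t htV ht
  refine ⟨htV, ?_⟩
  have : (y + t • (Pi.single (Fin.last n) 1 : Fin (n+1) → ℝ)) (Fin.last n) = y (Fin.last n) + t := by
    simp [Pi.single_eq_same]
  simp only [Set.mem_setOf_eq, this]
  have ht' : (0 : ℝ) < t := ht
  linarith

lemma mem_closure_lower {V : Set (Fin (n + 1) → ℝ)} (hV : IsOpen V) {y : Fin (n + 1) → ℝ}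
    (hy : y ∈ V) (hyl : y (Fin.last n) ≤ 0) :
    y ∈ closure (V ∩ {x | x (Fin.last n) < 0}) := by
  have hcont : Continuous fun t : ℝ => y - t • (Pi.single (Fin.last n) 1 : Fin (n+1) → ℝ) := by
    fun_prop
  have h1 : Tendsto (fun t : ℝ => y - t • (Pi.single (Fin.last n) 1 : Fin (n+1) → ℝ)) (𝓝[>] (0 : ℝ)) (𝓝 y) := by
    have := hcont.tendsto 0
    simp only [zero_smul, sub_zero] at this
    exact this.mono_left nhdsWithin_le_nhds
  refine mem_closure_of_tendsto h1 ?_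
  filter_upwards [h1.eventually (hV.mem_nhds hy), self_mem_nhdsWithin] with t htV ht
  refine ⟨htV, ?_⟩
  have : (y - t • (Pi.single (Fin.last n) 1 : Fin (n+1) → ℝ)) (Fin.last n) = y (Fin.last n) - t := by
    simp [Pi.single_eq_same]
  simp only [Set.mem_setOf_eq, this]
  have ht' : (0 : ℝ) < t := ht
  linarith

/-- One-sided extension of differentiability to the closure. -/
lemma side_extend {E F : Type*} [NormedAddCommGroup E] [NormedSpace ℝ E]
    [NormedAddCommGroup F] [NormedSpace ℝ F]
    {f : E → F} {φ : E → E →L[ℝ] F} {s t : Set E} {z : E} {L : E →L[ℝ] F}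
    (s_conv : Convex ℝ s) (s_open : IsOpen s)
    (hdiff : ∀ y ∈ s, HasFDerivAt f (φ y) y)
    (hcont : ContinuousOn f t) (hst : closure s ⊆ t)
    (hφ : Tendsto φ (𝓝[s] z) (𝓝 L)) :
    HasFDerivWithinAt f L (closure s) z := by
  apply hasFDerivWithinAt_closure_of_tendsto_fderiv
  · exact fun y hy => ((hdiff y hy).differentiableAt).differentiableWithinAt
  · exact s_conv
  · exact s_open
  · exact fun y hy => (hcont y (hst hy)).mono (subset_closure.trans hst)
  · exact Tendsto.congr' (by
      filter_upwards [self_mem_nhdsWithin] with y hy using ((hdiff y hy).fderiv).symm) hφ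

/-- Gluing the two one-sided derivatives at a boundary point. -/
lemma glue_hasFDerivAt {F : Type*} [NormedAddCommGroup F] [NormedSpace ℝ F]
    {z : Fin (n + 1) → ℝ} {r : ℝ} (hr : 0 < r)
    {f : (Fin (n + 1) → ℝ) → F} {L : (Fin (n + 1) → ℝ) →L[ℝ] F}
    (hup : HasFDerivWithinAt f L (closure (ball z r ∩ {x | 0 < x (Fin.last n)})) z)
    (hlo : HasFDerivWithinAt f L (closure (ball z r ∩ {x | x (Fin.last n) < 0})) z) :
    HasFDerivAt f L z := by
  have hcover : ball z r ⊆ closure (ball z r ∩ {x | 0 < x (Fin.last n)}) ∪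
      closure (ball z r ∩ {x | x (Fin.last n) < 0}) := by
    intro y hy
    rcases le_or_gt 0 (y (Fin.last n)) with h | h
    · exact Or.inl (mem_closure_upper isOpen_ball hy h)
    · exact Or.inr (mem_closure_lower isOpen_ball hy h.le)
  exact ((hup.union hlo).mono hcover).hasFDerivAt (ball_mem_nhds z hr)

lemma convex_upper (z : Fin (n + 1) → ℝ) (r : ℝ) :
    Convex ℝ (ball z r ∩ {x | 0 < x (Fin.last n)}) :=
  (convex_ball z r).inter (convex_halfSpace_gt ⟨fun _ _ => rfl, fun _ _ => rfl⟩ 0)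

lemma convex_lower (z : Fin (n + 1) → ℝ) (r : ℝ) :
    Convex ℝ (ball z r ∩ {x | x (Fin.last n) < 0}) :=
  (convex_ball z r).inter (convex_halfSpace_lt ⟨fun _ _ => rfl, fun _ _ => rfl⟩ 0)

lemma isOpen_pos_half : IsOpen {x : Fin (n + 1) → ℝ | 0 < x (Fin.last n)} :=
  isOpen_lt continuous_const (continuous_apply (Fin.last n))

lemma isOpen_neg_half : IsOpen {x : Fin (n + 1) → ℝ | x (Fin.last n) < 0} :=
  isOpen_lt (continuous_apply (Fin.last n)) continuous_const

lemma closure_upper_subset (z : Fin (n + 1) → ℝ) {r : ℝ} {U : Set (Fin (n + 1) → ℝ)}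
    (hball : closedBall z r ⊆ U) :
    closure (ball z r ∩ {x | 0 < x (Fin.last n)}) ⊆ U ∩ {x | 0 ≤ x (Fin.last n)} := by
  intro y hy
  have h := closure_inter_subset_inter_closure _ _ hy
  have hcl : closure {x : Fin (n + 1) → ℝ | 0 < x (Fin.last n)} ⊆ {x | 0 ≤ x (Fin.last n)} :=
    closure_minimal (fun x hx => by simpa using le_of_lt (by simpa using hx))
      (isClosed_le continuous_const (continuous_apply (Fin.last n)))
  exact ⟨hball (closure_ball_subset_closedBall h.1), hcl h.2⟩

lemma closure_lower_subset (z : Fin (n + 1) → ℝ) {r : ℝ} {U : Set (Fin (n + 1) → ℝ)}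
    (hball : closedBall z r ⊆ U) :
    closure (ball z r ∩ {x | x (Fin.last n) < 0}) ⊆ U ∩ {x | x (Fin.last n) ≤ 0} := by
  intro y hy
  have h := closure_inter_subset_inter_closure _ _ hy
  have hcl : closure {x : Fin (n + 1) → ℝ | x (Fin.last n) < 0} ⊆ {x | x (Fin.last n) ≤ 0} :=
    closure_minimal (fun x hx => by simpa using le_of_lt (by simpa using hx))
      (isClosed_le (continuous_apply (Fin.last n)) continuous_const)
  exact ⟨hball (closure_ball_subset_closedBall h.1), hcl h.2⟩

end ReflAux


set_option maxHeartbeats 2000000 in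
/-- Reflection extension of `C²` regularity: let `σ` be the reflection of
`ℝ^{n+1}` in the hyperplane `{x_{last} = 0}`, let `U` be a `σ`-invariant open
set, and let `u` be `σ`-symmetric on `U`.  If `u` is `C²` on
`U⁺ = U ∩ {x_{last} ≥ 0}` and the normal partial derivative of `u`, computed
within `U⁺`, vanishes on `U ∩ {x_{last} = 0}`, then `u` is `C²` on all of `U`. -/
theorem reflection_C2_extension (n : ℕ) (U : Set (Fin (n + 1) → ℝ))
    (hU : IsOpen U)
    (σ : (Fin (n + 1) → ℝ) → (Fin (n + 1) → ℝ))
    (hσ : ∀ x, σ x = Function.update x (Fin.last n) (-(x (Fin.last n))))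
    (hUinv : ∀ x ∈ U, σ x ∈ U)
    (u : (Fin (n + 1) → ℝ) → ℝ)
    (hsym : ∀ x ∈ U, u (σ x) = u x)
    (hC2 : ContDiffOn ℝ 2 u (U ∩ {x | 0 ≤ x (Fin.last n)}))
    (hnormal : ∀ x ∈ U, x (Fin.last n) = 0 →
      fderivWithin ℝ u (U ∩ {x | 0 ≤ x (Fin.last n)}) x (Pi.single (Fin.last n) 1) = 0) :
    ContDiffOn ℝ 2 u U := by
  classical
  have hσR : ∀ x, σ x = reflCLM n x := fun x => by rw [hσ, reflCLM_apply]
  set Up : Set (Fin (n + 1) → ℝ) := U ∩ {x | 0 ≤ x (Fin.last n)} with hUpdef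
  have hRU : ∀ y ∈ U, reflCLM n y ∈ U := fun y hy => by rw [← hσR]; exact hUinv y hy
  have hRu : ∀ y ∈ U, u (reflCLM n y) = u y := fun y hy => by rw [← hσR]; exact hsym y hy
  have hhalfUD : UniqueDiffOn ℝ {x : Fin (n + 1) → ℝ | 0 ≤ x (Fin.last n)} := by
    apply uniqueDiffOn_convex (convex_halfSpace_ge ⟨fun _ _ => rfl, fun _ _ => rfl⟩ 0)
    refine ⟨Pi.single (Fin.last n) 1, ?_⟩
    have hsub : {x : Fin (n + 1) → ℝ | 0 < x (Fin.last n)} ⊆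
        interior {x : Fin (n + 1) → ℝ | 0 ≤ x (Fin.last n)} :=
      interior_maximal (fun x hx => show (0:ℝ) ≤ x (Fin.last n) from le_of_lt hx) isOpen_pos_half
    exact hsub (by simp [Pi.single_eq_same])
  have hUD : UniqueDiffOn ℝ Up := by
    intro x hx
    rw [hUpdef, Set.inter_comm]
    exact (hhalfUD x hx.2).inter (hU.mem_nhds hx.1)
  set f' := fderivWithin ℝ u Up with hf'def
  set H := fderivWithin ℝ f' Up with hHdef
  have hue : ∀ z ∈ U, z (Fin.last n) = 0 → f' z (Pi.single (Fin.last n) 1) = 0 := hnormal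
  have hupOpen : IsOpen (U ∩ {x | 0 < x (Fin.last n)}) := hU.inter isOpen_pos_half
  have hloOpen : IsOpen (U ∩ {x | x (Fin.last n) < 0}) := hU.inter isOpen_neg_half
  have hnhds : ∀ y, y ∈ U → 0 < y (Fin.last n) → Up ∈ 𝓝 y := fun y hy h =>
    Filter.mem_of_superset (hupOpen.mem_nhds ⟨hy, h⟩) (fun x hx => ⟨hx.1, show (0:ℝ) ≤ x (Fin.last n) from le_of_lt hx.2⟩)
  have hdiffUp : ∀ y ∈ Up, HasFDerivWithinAt u (f' y) Up y := fun y hy =>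
    ((hC2.differentiableOn (by norm_num)) y hy).hasFDerivWithinAt
  have hf'C1 : ContDiffOn ℝ 1 f' Up := hC2.fderivWithin hUD (by norm_num)
  have hdf'Up : ∀ y ∈ Up, HasFDerivWithinAt f' (H y) Up y := fun y hy =>
    ((hf'C1.differentiableOn (by norm_num)) y hy).hasFDerivWithinAt
  have hf'cont : ContinuousOn f' Up := hf'C1.continuousOn
  have hHcont : ContinuousOn H Up := hf'C1.continuousOn_fderivWithin hUD (by norm_num)
  have hu_at : ∀ y, y ∈ U → 0 < y (Fin.last n) → HasFDerivAt u (f' y) y := fun y hy h =>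
    (hdiffUp y ⟨hy, h.le⟩).hasFDerivAt (hnhds y hy h)
  have hf'_at : ∀ y, y ∈ U → 0 < y (Fin.last n) → HasFDerivAt f' (H y) y := fun y hy h =>
    (hdf'Up y ⟨hy, h.le⟩).hasFDerivAt (hnhds y hy h)
  set P : ((Fin (n + 1) → ℝ) →L[ℝ] ℝ) →L[ℝ] ((Fin (n + 1) → ℝ) →L[ℝ] ℝ) :=
    (ContinuousLinearMap.compL ℝ (Fin (n + 1) → ℝ) (Fin (n + 1) → ℝ) ℝ).flip (reflCLM n)
    with hPdef
  have hPapp : ∀ (L : (Fin (n + 1) → ℝ) →L[ℝ] ℝ) (w : Fin (n + 1) → ℝ),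
      P L w = L (reflCLM n w) := fun L w => rfl
  have hM1 : ∀ z ∈ U, z (Fin.last n) = 0 → P (f' z) = f' z := by
    intro z hz hzl
    ext w
    rw [hPapp, reflCLM_eq_sub w, map_sub, map_smul, hue z hz hzl]
    simp
  have hRin : ∀ y, y ∈ U → y (Fin.last n) < 0 →
      reflCLM n y ∈ U ∧ 0 < reflCLM n y (Fin.last n) := by
    intro y hy h
    exact ⟨hRU y hy, by rw [reflCLM_apply_last]; linarith⟩
  -- tangential second derivatives of the normal derivative vanish on the hyperplane
  have htang : ∀ z ∈ U, z (Fin.last n) = 0 → ∀ w, w (Fin.last n) = 0 →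
      H z w (Pi.single (Fin.last n) 1) = 0 := by
    intro z hz hzl w hwl
    obtain ⟨ε, hε, hball⟩ := Metric.isOpen_iff.1 hU z hz
    set δ := ε / (‖w‖ + 1) with hδdef
    have hδ : 0 < δ := div_pos hε (by positivity)
    have hmem : ∀ t ∈ Set.Ioo (-δ) δ, z + t • w ∈ U ∧ (z + t • w) (Fin.last n) = 0 := by
      intro t ht
      constructor
      · apply hball
        rw [mem_ball, dist_eq_norm]
        have h1 : z + t • w - z = t • w := by abel
        rw [h1, norm_smul]
        have h2 : |t| < δ := abs_lt.2 ⟨ht.1, ht.2⟩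
        have h3 : δ * (‖w‖ + 1) = ε := div_mul_cancel₀ _ (by positivity)
        have h4 : (0:ℝ) ≤ ‖w‖ := norm_nonneg w
        have h5 : (0:ℝ) ≤ |t| := abs_nonneg t
        nlinarith [Real.norm_eq_abs t]
      · simp [hzl, hwl]
    have hinner : HasDerivWithinAt (fun t : ℝ => z + t • w) w (Set.Ioo (-δ) δ) 0 := by
      have h1 : HasDerivAt (fun t : ℝ => z + t • w) ((1 : ℝ) • w) 0 :=
        ((hasDerivAt_id (0 : ℝ)).smul_const w).const_add z
      simpa using h1.hasDerivWithinAt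
    have houter : HasFDerivWithinAt f' (H z) Up ((fun t : ℝ => z + t • w) 0) := by
      simpa using hdf'Up z ⟨hz, hzl.ge⟩
    have hmaps : Set.MapsTo (fun t : ℝ => z + t • w) (Set.Ioo (-δ) δ) Up :=
      fun t ht => ⟨(hmem t ht).1, le_of_eq ((hmem t ht).2).symm⟩
    have hcomp : HasDerivWithinAt (f' ∘ fun t : ℝ => z + t • w) (H z w) (Set.Ioo (-δ) δ) 0 :=
      houter.comp_hasDerivWithinAt (0 : ℝ) hinner hmaps
    have happ : HasDerivWithinAt (fun t : ℝ => f' (z + t • w) (Pi.single (Fin.last n) 1))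
        (H z w (Pi.single (Fin.last n) 1)) (Set.Ioo (-δ) δ) 0 := by
      have h1 := hcomp.clm_apply
        (hasDerivWithinAt_const (0:ℝ) (Set.Ioo (-δ) δ) (Pi.single (Fin.last n) (1:ℝ)))
      simpa using h1
    have hIoo : Set.Ioo (-δ) δ ∈ 𝓝 (0 : ℝ) := Ioo_mem_nhds (by linarith) hδ
    have h2 : HasDerivAt (fun t : ℝ => f' (z + t • w) (Pi.single (Fin.last n) 1))
        (H z w (Pi.single (Fin.last n) 1)) 0 := happ.hasDerivAt hIoo
    have h3 : (fun t : ℝ => f' (z + t • w) (Pi.single (Fin.last n) 1)) =ᶠ[𝓝 (0:ℝ)]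
        fun _ => (0:ℝ) := by
      filter_upwards [hIoo] with t ht
      exact hue (z + t • w) (hmem t ht).1 (hmem t ht).2
    have h4 : HasDerivAt (fun t : ℝ => f' (z + t • w) (Pi.single (Fin.last n) 1)) 0 0 := by
      rw [h3.hasDerivAt_iff]
      exact hasDerivAt_const 0 0
    exact h2.unique h4
  have hsymmB : ∀ z ∈ U, z (Fin.last n) = 0 → ∀ v w, H z v w = H z w v := by
    intro z hz hzl
    have hzUp : z ∈ Up := ⟨hz, hzl.ge⟩
    have hclos : z ∈ closure (interior Up) := by
      have hsubint : U ∩ {x | 0 < x (Fin.last n)} ⊆ interior Up :=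
        interior_maximal (fun x hx => ⟨hx.1, show (0:ℝ) ≤ x (Fin.last n) from hx.2.le⟩) hupOpen
      exact closure_mono hsubint (mem_closure_upper hU hz hzl.ge)
    have hsymm := (hC2 z hzUp).isSymmSndFDerivWithinAt minSmoothness_of_isRCLikeNormedField.le hUD hclos hzUp
    have hsymm' : ∀ v w, fderivWithin ℝ (fderivWithin ℝ u Up) Up z v w =
        fderivWithin ℝ (fderivWithin ℝ u Up) Up z w v := hsymm
    rw [← hf'def, ← hHdef] at hsymm'
    exact hsymm'
  have hM2 : ∀ z ∈ U, z (Fin.last n) = 0 →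
      P.comp ((H z).comp (reflCLM n)) = H z := by
    intro z hz hzl
    have hkey : ∀ w, H z w (Pi.single (Fin.last n) 1) =
        w (Fin.last n) * H z (Pi.single (Fin.last n) 1) (Pi.single (Fin.last n) 1) := by
      intro w
      have h0 : H z (w - w (Fin.last n) • (Pi.single (Fin.last n) 1 : Fin (n + 1) → ℝ))
          (Pi.single (Fin.last n) 1) = 0 :=
        htang z hz hzl _ (by simp [Pi.single_eq_same])
      rw [map_sub, map_smul] at h0
      simp only [ContinuousLinearMap.sub_apply, ContinuousLinearMap.coe_smul', Pi.smul_apply,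
        smul_eq_mul] at h0
      linarith
    have hkey2 : ∀ v, H z (Pi.single (Fin.last n) 1) v =
        v (Fin.last n) * H z (Pi.single (Fin.last n) 1) (Pi.single (Fin.last n) 1) := by
      intro v
      rw [hsymmB z hz hzl (Pi.single (Fin.last n) 1) v]
      exact hkey v
    ext w v
    simp only [ContinuousLinearMap.comp_apply]
    rw [hPapp]
    rw [reflCLM_eq_sub w, reflCLM_eq_sub v]
    simp only [map_sub, map_smul, ContinuousLinearMap.sub_apply, ContinuousLinearMap.coe_smul',
      Pi.smul_apply, smul_eq_mul]
    rw [hkey2 v, hkey w]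
    ring
  set g : (Fin (n + 1) → ℝ) → ((Fin (n + 1) → ℝ) →L[ℝ] ℝ) :=
    fun y => if 0 ≤ y (Fin.last n) then f' y else P (f' (reflCLM n y)) with hgdef
  have hg_up : ∀ y : Fin (n + 1) → ℝ, 0 ≤ y (Fin.last n) → g y = f' y := by
    intro y h
    simp only [hgdef]
    exact if_pos h
  have hg_lo : ∀ y : Fin (n + 1) → ℝ, y (Fin.last n) < 0 → g y = P (f' (reflCLM n y)) := by
    intro y h
    simp only [hgdef]
    exact if_neg (not_le.2 h)
  have hu_lo : ∀ y, y ∈ U → y (Fin.last n) < 0 → HasFDerivAt u (P (f' (reflCLM n y))) y := by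
    intro y hy h
    obtain ⟨hRy, hRyl⟩ := hRin y hy h
    have h1 : HasFDerivAt (fun w => u (reflCLM n w))
        ((f' (reflCLM n y)).comp (reflCLM n)) y :=
      (hu_at _ hRy hRyl).comp y (reflCLM n).hasFDerivAt
    have h2 : (fun w => u (reflCLM n w)) =ᶠ[𝓝 y] u := by
      filter_upwards [hloOpen.mem_nhds ⟨hy, h⟩] with w hw
      exact hRu w hw.1
    have h3 : P (f' (reflCLM n y)) = (f' (reflCLM n y)).comp (reflCLM n) := by
      ext w; rw [hPapp]; rfl
    rw [h3]
    exact h2.hasFDerivAt_iff.1 h1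
  have hu_bd : ∀ z, z ∈ U → z (Fin.last n) = 0 → HasFDerivAt u (f' z) z := by
    intro z hz hzl
    obtain ⟨r, hr, hball⟩ := Metric.nhds_basis_closedBall.mem_iff.1 (hU.mem_nhds hz)
    have hballU : ball z r ⊆ U := ball_subset_closedBall.trans hball
    have hzUp : z ∈ Up := ⟨hz, hzl.ge⟩
    have hup : HasFDerivWithinAt u (f' z)
        (closure (ball z r ∩ {x | 0 < x (Fin.last n)})) z := by
      refine side_extend (convex_upper z r) (isOpen_ball.inter isOpen_pos_half)
        (fun y hy => hu_at y (hballU hy.1) hy.2) hC2.continuousOn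
        (closure_upper_subset z hball) ?_
      exact Filter.Tendsto.mono_left (hf'cont z hzUp)
        (nhdsWithin_mono z (fun y hy => ⟨hballU hy.1, show (0:ℝ) ≤ y (Fin.last n) from hy.2.le⟩))
    have hcont_lo : ContinuousOn u (U ∩ {x | x (Fin.last n) ≤ 0}) := by
      have hmaps : Set.MapsTo (fun y => reflCLM n y) (U ∩ {x | x (Fin.last n) ≤ 0}) Up := by
        intro y hy
        refine ⟨hRU y hy.1, ?_⟩
        show 0 ≤ reflCLM n y (Fin.last n)
        rw [reflCLM_apply_last]
        exact neg_nonneg.2 hy.2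
      have h1 : ContinuousOn (fun y => u (reflCLM n y)) (U ∩ {x | x (Fin.last n) ≤ 0}) :=
        hC2.continuousOn.comp (reflCLM n).continuous.continuousOn hmaps
      exact h1.congr (fun y hy => (hRu y hy.1).symm)
    have hT1 : Filter.Tendsto (fun y => reflCLM n y)
        (𝓝[ball z r ∩ {x | x (Fin.last n) < 0}] z) (𝓝[Up] z) := by
      have hmaps : Set.MapsTo (fun y => reflCLM n y)
          (ball z r ∩ {x | x (Fin.last n) < 0}) Up := by
        intro y hy
        refine ⟨hRU y (hballU hy.1), ?_⟩
        show 0 ≤ reflCLM n y (Fin.last n)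
        rw [reflCLM_apply_last]
        have : y (Fin.last n) < 0 := hy.2
        linarith
      have h1 := ((reflCLM n).continuous.continuousWithinAt (x := z)).tendsto_nhdsWithin hmaps
      rwa [reflCLM_eq_self hzl] at h1
    have hlo : HasFDerivWithinAt u (f' z)
        (closure (ball z r ∩ {x | x (Fin.last n) < 0})) z := by
      have htd : Filter.Tendsto (fun y => P (f' (reflCLM n y)))
          (𝓝[ball z r ∩ {x | x (Fin.last n) < 0}] z) (𝓝 (P (f' z))) :=
        (P.continuous.tendsto _).comp (Filter.Tendsto.comp (hf'cont z hzUp) hT1)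
      refine side_extend (convex_lower z r) (isOpen_ball.inter isOpen_neg_half)
        (fun y hy => hu_lo y (hballU hy.1) hy.2) hcont_lo
        (closure_lower_subset z hball) ?_
      rw [← hM1 z hz hzl]
      exact htd
    exact glue_hasFDerivAt hr hup hlo
  have hg_at : ∀ y ∈ U, HasFDerivAt u (g y) y := by
    intro y hy
    rcases lt_trichotomy (y (Fin.last n)) 0 with h | h | h
    · rw [hg_lo y h]; exact hu_lo y hy h
    · rw [hg_up y h.ge]; exact hu_bd y hy h
    · rw [hg_up y h.le]; exact hu_at y hy h
  set Φ : (Fin (n + 1) → ℝ) → ((Fin (n + 1) → ℝ) →L[ℝ] ((Fin (n + 1) → ℝ) →L[ℝ] ℝ)) :=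
    fun y => P.comp ((H (reflCLM n y)).comp (reflCLM n)) with hΦdef
  set G : (Fin (n + 1) → ℝ) → ((Fin (n + 1) → ℝ) →L[ℝ] ((Fin (n + 1) → ℝ) →L[ℝ] ℝ)) :=
    fun y => if 0 ≤ y (Fin.last n) then H y else Φ y with hGdef
  have hG_up : ∀ y : Fin (n + 1) → ℝ, 0 ≤ y (Fin.last n) → G y = H y := by
    intro y h
    simp only [hGdef]
    exact if_pos h
  have hG_lo : ∀ y : Fin (n + 1) → ℝ, y (Fin.last n) < 0 → G y = Φ y := by
    intro y h
    simp only [hGdef]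
    exact if_neg (not_le.2 h)
  have hg'_up_at : ∀ y, y ∈ U → 0 < y (Fin.last n) → HasFDerivAt g (H y) y := by
    intro y hy h
    have h2 : f' =ᶠ[𝓝 y] g := by
      filter_upwards [isOpen_pos_half.mem_nhds h] with w hw
      exact (hg_up w (le_of_lt hw)).symm
    exact h2.hasFDerivAt_iff.1 (hf'_at y hy h)
  have hg'_lo_at : ∀ y, y ∈ U → y (Fin.last n) < 0 → HasFDerivAt g (Φ y) y := by
    intro y hy h
    obtain ⟨hRy, hRyl⟩ := hRin y hy h
    have h1 : HasFDerivAt (fun w => P (f' (reflCLM n w)))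
        (P.comp ((H (reflCLM n y)).comp (reflCLM n))) y :=
      (P.hasFDerivAt).comp y ((hf'_at _ hRy hRyl).comp y (reflCLM n).hasFDerivAt)
    have h2 : (fun w => P (f' (reflCLM n w))) =ᶠ[𝓝 y] g := by
      filter_upwards [isOpen_neg_half.mem_nhds h] with w hw
      exact (hg_lo w hw).symm
    have h3 : Φ y = P.comp ((H (reflCLM n y)).comp (reflCLM n)) := by
      simp only [hΦdef]
    rw [h3]
    exact h2.hasFDerivAt_iff.1 h1
  have hΞ : Continuous (fun A : (Fin (n + 1) → ℝ) →L[ℝ] ((Fin (n + 1) → ℝ) →L[ℝ] ℝ) =>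
      P.comp (A.comp (reflCLM n))) := by
    have c1 : Continuous (fun A : (Fin (n + 1) → ℝ) →L[ℝ] ((Fin (n + 1) → ℝ) →L[ℝ] ℝ) =>
        A.comp (reflCLM n)) :=
      ((ContinuousLinearMap.compL ℝ (Fin (n + 1) → ℝ) (Fin (n + 1) → ℝ)
        ((Fin (n + 1) → ℝ) →L[ℝ] ℝ)).flip (reflCLM n)).continuous
    have c2 : Continuous (fun B : (Fin (n + 1) → ℝ) →L[ℝ] ((Fin (n + 1) → ℝ) →L[ℝ] ℝ) =>
        P.comp B) :=
      (ContinuousLinearMap.compL ℝ (Fin (n + 1) → ℝ) ((Fin (n + 1) → ℝ) →L[ℝ] ℝ)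
        ((Fin (n + 1) → ℝ) →L[ℝ] ℝ) P).continuous
    exact c2.comp c1
  have hmapsLo : Set.MapsTo (fun y => reflCLM n y) (U ∩ {x | x (Fin.last n) ≤ 0}) Up := by
    intro y hy
    refine ⟨hRU y hy.1, ?_⟩
    show 0 ≤ reflCLM n y (Fin.last n)
    rw [reflCLM_apply_last]
    exact neg_nonneg.2 hy.2
  have hgcontUp : ContinuousOn g Up := hf'cont.congr (fun y hy => hg_up y hy.2)
  have hgcontLo : ContinuousOn g (U ∩ {x | x (Fin.last n) ≤ 0}) := by
    have h1 : ContinuousOn (fun y => P (f' (reflCLM n y))) (U ∩ {x | x (Fin.last n) ≤ 0}) :=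
      P.continuous.comp_continuousOn
        (hf'cont.comp (reflCLM n).continuous.continuousOn hmapsLo)
    refine h1.congr ?_
    intro y hy
    rcases eq_or_lt_of_le (show y (Fin.last n) ≤ 0 from hy.2) with h | h
    · show g y = P (f' (reflCLM n y))
      rw [hg_up y h.ge, reflCLM_eq_self h, hM1 y hy.1 h]
    · exact hg_lo y h
  have hg_bd : ∀ z, z ∈ U → z (Fin.last n) = 0 → HasFDerivAt g (H z) z := by
    intro z hz hzl
    obtain ⟨r, hr, hball⟩ := Metric.nhds_basis_closedBall.mem_iff.1 (hU.mem_nhds hz)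
    have hballU : ball z r ⊆ U := ball_subset_closedBall.trans hball
    have hzUp : z ∈ Up := ⟨hz, hzl.ge⟩
    have hup : HasFDerivWithinAt g (H z)
        (closure (ball z r ∩ {x | 0 < x (Fin.last n)})) z := by
      refine side_extend (convex_upper z r) (isOpen_ball.inter isOpen_pos_half)
        (fun y hy => hg'_up_at y (hballU hy.1) hy.2) hgcontUp
        (closure_upper_subset z hball) ?_
      exact Filter.Tendsto.mono_left (hHcont z hzUp)
        (nhdsWithin_mono z (fun y hy => ⟨hballU hy.1, show (0:ℝ) ≤ y (Fin.last n) from hy.2.le⟩))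
    have hT1 : Filter.Tendsto (fun y => reflCLM n y)
        (𝓝[ball z r ∩ {x | x (Fin.last n) < 0}] z) (𝓝[Up] z) := by
      have hmaps : Set.MapsTo (fun y => reflCLM n y)
          (ball z r ∩ {x | x (Fin.last n) < 0}) Up := by
        intro y hy
        refine ⟨hRU y (hballU hy.1), ?_⟩
        show 0 ≤ reflCLM n y (Fin.last n)
        rw [reflCLM_apply_last]
        have : y (Fin.last n) < 0 := hy.2
        linarith
      have h1 := ((reflCLM n).continuous.continuousWithinAt (x := z)).tendsto_nhdsWithin hmaps
      rwa [reflCLM_eq_self hzl] at h1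
    have hlo : HasFDerivWithinAt g (H z)
        (closure (ball z r ∩ {x | x (Fin.last n) < 0})) z := by
      have htd : Filter.Tendsto Φ
          (𝓝[ball z r ∩ {x | x (Fin.last n) < 0}] z)
          (𝓝 (P.comp ((H z).comp (reflCLM n)))) := by
        have h1 := (hΞ.tendsto (H z)).comp (Filter.Tendsto.comp (hHcont z hzUp) hT1)
        exact h1
      refine side_extend (convex_lower z r) (isOpen_ball.inter isOpen_neg_half)
        (fun y hy => hg'_lo_at y (hballU hy.1) hy.2) hgcontLo
        (closure_lower_subset z hball) ?_
      rw [← hM2 z hz hzl]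
      exact htd
    exact glue_hasFDerivAt hr hup hlo
  have hG_at : ∀ y ∈ U, HasFDerivAt g (G y) y := by
    intro y hy
    rcases lt_trichotomy (y (Fin.last n)) 0 with h | h | h
    · rw [hG_lo y h]; exact hg'_lo_at y hy h
    · rw [hG_up y h.ge]; exact hg_bd y hy h
    · rw [hG_up y h.le]; exact hg'_up_at y hy h
  have hGcont : ContinuousOn G U := by
    intro y hy
    rcases lt_trichotomy (y (Fin.last n)) 0 with h | h | h
    · obtain ⟨hRy, hRyl⟩ := hRin y hy h
      have h1 : ContinuousAt H (reflCLM n y) := hHcont.continuousAt (hnhds _ hRy hRyl)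
      have h2 : ContinuousAt (fun w => H (reflCLM n w)) y :=
        h1.comp (reflCLM n).continuous.continuousAt
      have hA : ContinuousAt Φ y := hΞ.continuousAt.comp h2
      have hEq : Φ =ᶠ[𝓝 y] G := by
        filter_upwards [isOpen_neg_half.mem_nhds h] with w hw
        exact (hG_lo w hw).symm
      exact (hA.congr hEq).continuousWithinAt
    · have hyUp : y ∈ Up := ⟨hy, h.ge⟩
      have hWup : ContinuousWithinAt G Up y := by
        refine (hHcont y hyUp).congr ?_ ?_
        · exact fun w hw => hG_up w hw.2
        · exact hG_up y h.ge
      have hWlo : ContinuousWithinAt G (U ∩ {x | x (Fin.last n) ≤ 0}) y := by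
        have hT : Filter.Tendsto (fun w => reflCLM n w)
            (𝓝[U ∩ {x | x (Fin.last n) ≤ 0}] y) (𝓝[Up] y) := by
          have h1 := ((reflCLM n).continuous.continuousWithinAt (x := y)).tendsto_nhdsWithin hmapsLo
          rwa [reflCLM_eq_self h] at h1
        have htd : Filter.Tendsto Φ (𝓝[U ∩ {x | x (Fin.last n) ≤ 0}] y)
            (𝓝 (P.comp ((H y).comp (reflCLM n)))) :=
          (hΞ.tendsto (H y)).comp (Filter.Tendsto.comp (hHcont y hyUp) hT)
        have hGy : G y = P.comp ((H y).comp (reflCLM n)) := by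
          rw [hG_up y h.ge, hM2 y hy h]
        have hCW : ContinuousWithinAt Φ (U ∩ {x | x (Fin.last n) ≤ 0}) y := by
          have hΦy : Φ y = P.comp ((H y).comp (reflCLM n)) := by
            simp only [hΦdef]
            rw [reflCLM_eq_self h]
          rw [ContinuousWithinAt, hΦy]
          exact htd
        refine hCW.congr ?_ ?_
        · intro w hw
          rcases eq_or_lt_of_le (show w (Fin.last n) ≤ 0 from hw.2) with h' | h'
          · rw [hG_up w h'.ge]
            have hΦw : Φ w = P.comp ((H w).comp (reflCLM n)) := by
              simp only [hΦdef]
              rw [reflCLM_eq_self h']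
            rw [hΦw, hM2 w hw.1 h']
          · exact hG_lo w h'
        · rw [hGy]
          simp only [hΦdef]
          rw [reflCLM_eq_self h]
      have hcover : U ⊆ Up ∪ (U ∩ {x | x (Fin.last n) ≤ 0}) := by
        intro w hw
        rcases le_total 0 (w (Fin.last n)) with h' | h'
        · exact Or.inl ⟨hw, h'⟩
        · exact Or.inr ⟨hw, h'⟩
      exact (hWup.union hWlo).mono hcover
    · have h1 : ContinuousAt H y := hHcont.continuousAt (hnhds y hy h)
      have hEq : H =ᶠ[𝓝 y] G := by
        filter_upwards [isOpen_pos_half.mem_nhds h] with w hw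
        exact (hG_up w (le_of_lt hw)).symm
      exact (h1.congr hEq).continuousWithinAt
  intro x hx
  apply ContDiffAt.contDiffWithinAt
  have h2eq : (2 : WithTop ℕ∞) = ((1 : ℕ) : WithTop ℕ∞) + 1 := by norm_cast
  rw [h2eq, contDiffAt_succ_iff_hasFDerivAt]
  refine ⟨g, ⟨U, hU.mem_nhds hx, hg_at⟩, ?_⟩
  have h1eq : ((1 : ℕ) : WithTop ℕ∞) = ((0 : ℕ) : WithTop ℕ∞) + 1 := by norm_cast
  rw [h1eq, contDiffAt_succ_iff_hasFDerivAt]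
  refine ⟨G, ⟨U, hU.mem_nhds hx, hG_at⟩, ?_⟩
  have h0eq : (((0 : ℕ) : WithTop ℕ∞)) = (0 : WithTop ℕ∞) := by norm_cast
  rw [h0eq]
  exact contDiffAt_zero.2 ⟨U, hU.mem_nhds hx, hGcont⟩
end

section
/- Let m > 0, c > 0, H₀ > 0 and T ≥ 0 be real numbers, and let f : [0, T] → ℝ be a differentiable function with f(0) = H₀ and f'(t) = f(t)²/m − m·c for all t ∈ [0, T]. If either H₀ ≥ m·√c, or T·√c < artanh( H₀/(m·√c) ), then f(t) > 0 for all t ∈ [0, T]. -/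
/-- The inverse hyperbolic tangent, `artanh x = ½ log((1+x)/(1−x))`. -/
noncomputable def Real.artanhLog (x : ℝ) : ℝ := (1 / 2) * Real.log ((1 + x) / (1 - x))

open Set

/-- Grönwall-type uniqueness: a function with `|g'| ≤ K|g|` and `g p = 0` vanishes. -/
lemma riccati_aux_gronwall_zero {g g' : ℝ → ℝ} {K p q : ℝ}
    (hg : ContinuousOn g (Icc p q))
    (hd : ∀ x ∈ Ico p q, HasDerivWithinAt g (g' x) (Icc p q) x)
    (hbd : ∀ x ∈ Ico p q, |g' x| ≤ K * |g x|)
    (h0 : g p = 0) : ∀ x ∈ Icc p q, g x = 0 := by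
  intro x hx
  have H := norm_le_gronwallBound_of_norm_deriv_right_le (δ := 0) (ε := 0) (K := K) hg
    (fun t ht => (hd t ht).mono_of_mem_nhdsWithin (Icc_mem_nhdsGE_of_mem ⟨ht.1, ht.2⟩))
    (by simp [h0])
    (fun t ht => by
      rw [Real.norm_eq_abs, Real.norm_eq_abs, add_zero]; exact hbd t ht) x hx
  rw [gronwallBound_ε0_δ0] at H
  have := abs_nonneg (g x)
  rw [Real.norm_eq_abs] at H
  have : |g x| = 0 := le_antisymm H (abs_nonneg _)
  exact abs_eq_zero.mp this

/-- Sign preservation for linear ODEs `g' = a·g`: if `g 0 ≤ 0` then `g ≤ 0`. -/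
lemma riccati_aux_sign_preserved {g a : ℝ → ℝ} {T K : ℝ}
    (hg : ContinuousOn g (Icc 0 T))
    (hd : ∀ t ∈ Icc (0:ℝ) T, HasDerivWithinAt g (a t * g t) (Icc 0 T) t)
    (hK : ∀ t ∈ Icc (0:ℝ) T, |a t| ≤ K)
    (h0 : g 0 ≤ 0) : ∀ t ∈ Icc (0:ℝ) T, g t ≤ 0 := by
  by_contra hcon
  push_neg at hcon
  obtain ⟨t₁, ht₁, hgt₁⟩ := hcon
  have ht₁T : Icc (0:ℝ) t₁ ⊆ Icc 0 T := Icc_subset_Icc le_rfl ht₁.2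
  set S : Set ℝ := Icc 0 t₁ ∩ g ⁻¹' (Iic 0) with hS
  have hSne : S.Nonempty := ⟨0, ⟨le_rfl, ht₁.1⟩, h0⟩
  have hSbdd : BddAbove S := ⟨t₁, fun s hs => hs.1.2⟩
  have hSclosed : IsClosed S :=
    (hg.mono ht₁T).preimage_isClosed_of_isClosed isClosed_Icc isClosed_Iic
  set t₀ := sSup S with ht₀
  have ht₀S : t₀ ∈ S := hSclosed.csSup_mem hSne hSbdd
  have ht₀0 : 0 ≤ t₀ := ht₀S.1.1
  have ht₀t₁ : t₀ ≤ t₁ := ht₀S.1.2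
  have hpos : ∀ s ∈ Ioc t₀ t₁, 0 < g s := by
    intro s hs
    by_contra hns
    push_neg at hns
    have hsS : s ∈ S := ⟨⟨le_trans ht₀0 hs.1.le, hs.2⟩, hns⟩
    exact absurd (le_csSup hSbdd hsS) (not_le.2 hs.1)
  have ht₀lt : t₀ < t₁ := by
    rcases lt_or_eq_of_le ht₀t₁ with h | h
    · exact h
    · exfalso; rw [h] at ht₀S; exact absurd ht₀S.2 (not_le.2 hgt₁)
  -- g t₀ = 0
  have hgt₀0 : g t₀ = 0 := by
    refine le_antisymm ht₀S.2 ?_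
    have hco : ContinuousWithinAt g (Ioc t₀ t₁) t₀ :=
      (hg t₀ (ht₁T ht₀S.1)).mono (fun s hs => ht₁T ⟨le_trans ht₀0 hs.1.le, hs.2⟩)
    have hco' : Filter.Tendsto g (nhdsWithin t₀ (Ioc t₀ t₁)) (nhds (g t₀)) := hco
    rw [nhdsWithin_Ioc_eq_nhdsGT ht₀lt] at hco'
    exact ge_of_tendsto hco' (Filter.eventually_of_mem
      (Ioc_mem_nhdsGT_of_mem (Set.mem_Ico.2 ⟨le_rfl, ht₀lt⟩))
      (fun s hs => (hpos s hs).le))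
  -- Grönwall on [t₀, t₁]
  have hzero := riccati_aux_gronwall_zero (g := g) (g' := fun t => a t * g t) (K := K)
    (hg.mono (Icc_subset_Icc ht₀0 ht₁.2))
    (fun s hs => ((hd s ⟨le_trans ht₀0 hs.1, le_trans hs.2.le ht₁.2⟩).mono
      (Icc_subset_Icc ht₀0 ht₁.2)))
    (fun s hs => by
      have hsI : s ∈ Icc (0:ℝ) T := ⟨le_trans ht₀0 hs.1, le_trans hs.2.le ht₁.2⟩
      rw [abs_mul]
      exact mul_le_mul_of_nonneg_right (hK s hsI) (abs_nonneg _))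
    hgt₀0 t₁ ⟨ht₀t₁, le_rfl⟩
  exact absurd hzero (ne_of_gt hgt₁)

lemma riccati_aux_deriv (m sc S Cc : ℝ) (hm : m ≠ 0) (hCc : Cc ≠ 0) :
    (m * sc * (S / Cc)) ^ 2 / m - m * (sc * sc) =
      m * sc * ((Cc * -sc * Cc - S * (S * -sc)) / Cc ^ 2) := by
  field_simp; ring

/-- Positivity of the exact Riccati solution: if `f' = f²/m − m·c` on `[0,T]`
with `f(0) = H₀ > 0`, and either `H₀ ≥ m√c` or `T√c < artanh(H₀/(m√c))`, then
`f > 0` on `[0,T]`. -/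
theorem riccati_solution_positive (m c H₀ T : ℝ) (hm : 0 < m) (hc : 0 < c)
    (hH₀ : 0 < H₀) (hT : 0 ≤ T)
    (f : ℝ → ℝ) (hf0 : f 0 = H₀)
    (hf : ∀ t ∈ Set.Icc (0 : ℝ) T,
      HasDerivWithinAt f ((f t) ^ 2 / m - m * c) (Set.Icc 0 T) t)
    (hcase : m * Real.sqrt c ≤ H₀ ∨
      T * Real.sqrt c < Real.artanhLog (H₀ / (m * Real.sqrt c))) :
    ∀ t ∈ Set.Icc (0 : ℝ) T, 0 < f t := by
  have hsc : 0 < Real.sqrt c := Real.sqrt_pos.2 hc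
  have hscsq : Real.sqrt c * Real.sqrt c = c := Real.mul_self_sqrt hc.le
  set b : ℝ := m * Real.sqrt c with hbdef
  have hb : 0 < b := mul_pos hm hsc
  have hfc : ContinuousOn f (Icc 0 T) := fun t ht => (hf t ht).continuousWithinAt
  obtain ⟨C, hC⟩ := isCompact_Icc.exists_bound_of_continuousOn hfc
  rcases le_or_gt b H₀ with h1 | h2
  · -- Case 1: H₀ ≥ b; show f ≥ b via sign preservation of g = b − f.
    have hkey := riccati_aux_sign_preserved (g := fun t => b - f t)
      (a := fun t => (f t + b) / m) (T := T) (K := (C + b) / m)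
      (continuousOn_const.sub hfc)
      (fun t ht => by
        have hd := (hasDerivWithinAt_const t (Icc 0 T) b).sub (hf t ht)
        have hbb : b * b = m * (m * c) := by rw [hbdef]; linear_combination m ^ 2 * hscsq
        have hm' : m ≠ 0 := hm.ne'
        refine hd.congr_deriv (Eq.symm ?_)
        field_simp
        linear_combination hbb)
      (fun t ht => by
        have h1 := hC t ht
        rw [Real.norm_eq_abs] at h1
        rw [abs_div, abs_of_pos hm, div_le_div_iff_of_pos_right hm]
        calc |f t + b| ≤ |f t| + |b| := abs_add_le _ _
          _ ≤ C + b := by rw [abs_of_pos hb]; linarith)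
      (by simp [hf0]; linarith)
    intro t ht
    have := hkey t ht
    linarith
  · -- Case 2: H₀ < b; f equals the explicit tanh solution.
    have hA : T * Real.sqrt c < Real.artanhLog (H₀ / b) := hcase.resolve_left (not_le.2 h2)
    set x : ℝ := H₀ / b with hxdef
    have hx0 : 0 < x := div_pos hH₀ hb
    have hx1 : x < 1 := (div_lt_one hb).2 h2
    set A : ℝ := Real.artanhLog x with hAdef
    set u : ℝ := (1 + x) / (1 - x) with hudef
    have hu : 0 < u := div_pos (by linarith) (by linarith)
    have hE2 : Real.exp A ^ 2 = u := by
      rw [sq, ← Real.exp_add]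
      have : A + A = Real.log u := by
        rw [hAdef, Real.artanhLog]; ring
      rw [this, Real.exp_log hu]
    have htanh : Real.sinh A / Real.cosh A = x := by
      have hE : 0 < Real.exp A := Real.exp_pos A
      have hE2' : Real.exp A * Real.exp A * (1 - x) = 1 + x := by
        have h1x : (1:ℝ) - x ≠ 0 := by linarith
        have hh : Real.exp A * Real.exp A = u := by rw [← sq]; exact hE2
        rw [hh, hudef]
        field_simp
      rw [Real.sinh_eq, Real.cosh_eq, Real.exp_neg]
      have h1 : 0 < Real.exp A + (Real.exp A)⁻¹ := by positivity
      field_simp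
      nlinarith [hE2']
    set F : ℝ → ℝ := fun t =>
      b * (Real.sinh (A - Real.sqrt c * t) / Real.cosh (A - Real.sqrt c * t)) with hFdef
    have hF0 : F 0 = H₀ := by
      simp only [hFdef, mul_zero, sub_zero, htanh]
      rw [hxdef]; field_simp
    have hFd : ∀ t : ℝ, HasDerivAt F (F t ^ 2 / m - m * c) t := by
      intro t
      set y := A - Real.sqrt c * t with hy
      have hφ : HasDerivAt (fun s : ℝ => A - Real.sqrt c * s) (-Real.sqrt c) t := by
        simpa using ((hasDerivAt_id t).const_mul (Real.sqrt c)).const_sub A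
      have hs : HasDerivAt (fun s : ℝ => Real.sinh (A - Real.sqrt c * s))
          (Real.cosh y * -Real.sqrt c) t := HasDerivAt.comp (h₂ := Real.sinh) t (Real.hasDerivAt_sinh y) hφ
      have hch : HasDerivAt (fun s : ℝ => Real.cosh (A - Real.sqrt c * s))
          (Real.sinh y * -Real.sqrt c) t := HasDerivAt.comp (h₂ := Real.cosh) t (Real.hasDerivAt_cosh y) hφ
      have hcne : Real.cosh y ≠ 0 := (Real.cosh_pos y).ne'
      have hq := (hs.div hch hcne).const_mul b
      refine hq.congr_deriv (Eq.symm ?_)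
      have key := riccati_aux_deriv m (Real.sqrt c) (Real.sinh y) (Real.cosh y) hm.ne' hcne
      simp only [hFdef]
      rw [← hy, hbdef, show m * c = m * (Real.sqrt c * Real.sqrt c) from by rw [hscsq]]
      linear_combination key
    have hFc : ContinuousOn F (Icc 0 T) :=
      fun t _ => (hFd t).continuousAt.continuousWithinAt
    obtain ⟨D, hD⟩ := isCompact_Icc.exists_bound_of_continuousOn hFc
    -- uniqueness: f = F on [0, T]
    have huniq := riccati_aux_gronwall_zero (g := fun t => f t - F t)
      (g' := fun t => ((f t + F t) / m) * (f t - F t)) (K := (C + D) / m) (p := 0) (q := T)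
      (hfc.sub hFc)
      (fun t ht => by
        have htI : t ∈ Icc (0:ℝ) T := ⟨ht.1, ht.2.le⟩
        have hd := (hf t htI).sub ((hFd t).hasDerivWithinAt)
        refine hd.congr_deriv (Eq.symm ?_)
        field_simp; ring)
      (fun t ht => by
        have htI : t ∈ Icc (0:ℝ) T := ⟨ht.1, ht.2.le⟩
        have h1 := hC t htI; have h2' := hD t htI
        rw [Real.norm_eq_abs] at h1 h2'
        have hsum : |f t + F t| ≤ C + D := (abs_add_le _ _).trans (add_le_add h1 h2')
        show |(f t + F t) / m * (f t - F t)| ≤ (C + D) / m * |f t - F t|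
        rw [abs_mul, abs_div, abs_of_pos hm]
        exact mul_le_mul_of_nonneg_right ((div_le_div_iff_of_pos_right hm).2 hsum) (abs_nonneg _))
      (by simp [hf0, hF0])
    intro t ht
    have hfF : f t = F t := sub_eq_zero.mp (huniq t ht)
    rw [hfF, hFdef]
    have hyt : 0 < A - Real.sqrt c * t := by
      have : Real.sqrt c * t ≤ T * Real.sqrt c := by
        rw [mul_comm]; exact mul_le_mul_of_nonneg_right ht.2 hsc.le
      linarith
    exact mul_pos hb (div_pos (Real.sinh_pos_iff.2 hyt) (Real.cosh_pos _))
end
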